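/- arXiv:1906.06099 — 4 statements merged into one kernel-verified Lean document; each statement's English description precedes it below -/
import Mathlib

section
/- Let Y be an Abelian group and suppose real-valued functions ψ₁,…,ψₙ on Y satisfy ∑ⱼ ψⱼ(aⱼu + bⱼv) = ∑ⱼ ψⱼ(aⱼu − bⱼv) for all u, v ∈ Y, where aⱼ, bⱼ are integers. Then for arbitrary h₁,…,hₙ, k₂,…,kₙ ∈ Y, the function ψ₁ satisfies Δ_{m₂₁k₂}⋯Δ_{mₙ₁kₙ} Δ_{l₁₁h₁}⋯Δ_{lₙ₁hₙ} ψ₁(a₁u) = 0 for all u ∈ Y, where l_{ij} = aⱼbᵢ + bⱼaᵢ, m_{ij} = aⱼbᵢ − bⱼaᵢ, and Δ_h f(y) = f(y+h) − f(y) is the finite difference operator. -/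
/-- The finite difference operator `Δ_h f(y) = f(y+h) - f(y)`. -/
def finDiff {Y : Type*} [Add Y] (h : Y) (f : Y → ℝ) : Y → ℝ :=
  fun y => f (y + h) - f y

/-- Composition of finite difference operators along a list of increments. -/
def finDiffComp {Y : Type*} [Add Y] (ops : List Y) (f : Y → ℝ) : Y → ℝ :=
  ops.foldr finDiff f

section FDAux

variable {Y : Type*}

theorem finDiffComp_cons [Add Y] (s : Y) (ops : List Y) (f : Y → ℝ) :
    finDiffComp (s :: ops) f = finDiff s (finDiffComp ops f) := rfl

theorem finDiffComp_zero_fun [Add Y] (ops : List Y) :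
    finDiffComp ops (fun _ => (0:ℝ)) = fun _ => 0 := by
  induction ops with
  | nil => rfl
  | cons s t ih =>
    rw [finDiffComp_cons, ih]
    funext y
    simp [finDiff]

theorem finDiffComp_of_zero_mem [AddZeroClass Y] {ops : List Y} (h0 : (0:Y) ∈ ops)
    (f : Y → ℝ) : finDiffComp ops f = fun _ => 0 := by
  induction ops with
  | nil => simp at h0
  | cons s t ih =>
    rcases List.mem_cons.1 h0 with h | h
    · funext y
      simp [finDiffComp_cons, finDiff, ← h]
    · rw [finDiffComp_cons, ih h]
      funext y
      simp [finDiff]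

theorem finDiff_sub [Add Y] (s : Y) (f g : Y → ℝ) :
    finDiff s (fun y => f y - g y) = fun y => finDiff s f y - finDiff s g y := by
  funext y; simp [finDiff]; ring

theorem finDiffComp_sub [Add Y] (ops : List Y) (f g : Y → ℝ) :
    finDiffComp ops (fun y => f y - g y)
      = fun y => finDiffComp ops f y - finDiffComp ops g y := by
  induction ops with
  | nil => rfl
  | cons s t ih => rw [finDiffComp_cons, ih, finDiff_sub]; rfl

theorem finDiff_sum [Add Y] {ι : Type*} (sI : Finset ι) (s : Y) (f : ι → Y → ℝ) :
    finDiff s (fun y => ∑ j ∈ sI, f j y) = fun y => ∑ j ∈ sI, finDiff s (f j) y := by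
  funext y; simp [finDiff, Finset.sum_sub_distrib]

theorem finDiffComp_sum [Add Y] {ι : Type*} (sI : Finset ι) (ops : List Y) (f : ι → Y → ℝ) :
    finDiffComp ops (fun y => ∑ j ∈ sI, f j y)
      = fun y => ∑ j ∈ sI, finDiffComp ops (f j) y := by
  induction ops with
  | nil => rfl
  | cons s t ih => rw [finDiffComp_cons, ih, finDiff_sum]; rfl

theorem finDiffComp_comp {Y' : Type*} [Add Y] [Add Y'] (L : Y' → Y)
    (hL : ∀ p q, L (p + q) = L p + L q) (ops : List Y') (g : Y → ℝ) :
    finDiffComp ops (fun x => g (L x)) = fun x => finDiffComp (ops.map L) g (L x) := by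
  induction ops with
  | nil => rfl
  | cons s t ih =>
    funext x
    rw [List.map_cons, finDiffComp_cons, finDiffComp_cons]
    show finDiff s (finDiffComp t fun x => g (L x)) x = _
    rw [ih]
    simp [finDiff, hL]

end FDAux

/-- If real functions `ψ j` on an Abelian group `Y` satisfy
`∑ j, ψ j (a j • u + b j • v) = ∑ j, ψ j (a j • u - b j • v)` for all `u v ∈ Y`,
then for arbitrary `h₁,…,hₙ, k₂,…,kₙ ∈ Y` the function `ψ₁` satisfies
`Δ_{m₂₁k₂}⋯Δ_{mₙ₁kₙ} Δ_{l₁₁h₁}⋯Δ_{lₙ₁hₙ} ψ₁(a₁ • u) = 0`, where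
`l_{i1} = a₁ bᵢ + b₁ aᵢ` and `m_{i1} = a₁ bᵢ - b₁ aᵢ`. -/
theorem finite_difference_elimination
    {Y : Type*} [AddCommGroup Y] (n : ℕ) (hn : 2 ≤ n)
    (ψ : Fin n → Y → ℝ) (a b : Fin n → ℤ)
    (heq : ∀ u v : Y,
      ∑ j, ψ j (a j • u + b j • v) = ∑ j, ψ j (a j • u - b j • v)) :
    ∀ (h k : Fin n → Y) (u : Y),
      finDiffComp
        ((List.ofFn fun j : Fin n => (a (⟨0, by omega⟩ : Fin n) * b j - b (⟨0, by omega⟩ : Fin n) * a j) • k j).tail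
          ++ List.ofFn fun j : Fin n => (a (⟨0, by omega⟩ : Fin n) * b j + b (⟨0, by omega⟩ : Fin n) * a j) • h j)
        (ψ (⟨0, by omega⟩ : Fin n)) (a (⟨0, by omega⟩ : Fin n) • u) = 0 := by
  intro h k u
  obtain ⟨m, rfl⟩ : ∃ m, n = m + 1 := ⟨n - 1, by omega⟩
  set z : Fin (m + 1) := ⟨0, by omega⟩ with hz
  -- two-variable linear maps
  set Lp : Fin (m+1) → Y × Y → Y := fun j p => a j • p.1 + b j • p.2 with hLpdef
  set Lm : Fin (m+1) → Y × Y → Y := fun j p => a j • p.1 - b j • p.2 with hLmdef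
  have hLp : ∀ j (p q : Y × Y), Lp j (p + q) = Lp j p + Lp j q := by
    intro j p q
    simp only [hLpdef, Prod.fst_add, Prod.snd_add, smul_add]
    abel
  have hLm : ∀ j (p q : Y × Y), Lm j (p + q) = Lm j p + Lm j q := by
    intro j p q
    simp only [hLmdef, Prod.fst_add, Prod.snd_add, smul_add]
    abel
  -- the 2D increments
  set K : Fin (m+1) → Y × Y := fun j => (b j • k j, -(a j • k j)) with hK
  set H : Fin (m+1) → Y × Y := fun j => (b j • h j, a j • h j) with hH
  set ops2 : List (Y × Y) := (List.ofFn K).tail ++ List.ofFn H with hops2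
  -- images of increments
  have hPK : ∀ j i, Lp j (K i) = (a j * b i - b j * a i) • k i := by
    intro j i
    simp only [hLpdef, hK, smul_neg, smul_smul, sub_smul]
    abel
  have hMK : ∀ j i, Lm j (K i) = (a j * b i + b j * a i) • k i := by
    intro j i
    simp only [hLmdef, hK, smul_neg, smul_smul, add_smul]
    abel
  have hPH : ∀ j i, Lp j (H i) = (a j * b i + b j * a i) • h i := by
    intro j i
    simp only [hLpdef, hH, smul_smul, add_smul]
  have hMH : ∀ j i, Lm j (H i) = (a j * b i - b j * a i) • h i := by
    intro j i
    simp only [hLmdef, hH, smul_smul, sub_smul]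
  have hPu : ∀ j, Lp j ((u, 0) : Y × Y) = a j • u := by
    intro j; simp [hLpdef]
  have hMu : ∀ j, Lm j ((u, 0) : Y × Y) = a j • u := by
    intro j; simp [hLmdef]
  -- the vanishing two-variable function
  have hF : (fun p : Y × Y => (∑ j, ψ j (Lp j p)) - ∑ j, ψ j (Lm j p)) = fun _ => (0:ℝ) := by
    funext p
    have := heq p.1 p.2
    simp only [hLpdef, hLmdef]
    rw [this]
    ring
  have hFzero : finDiffComp ops2
      (fun p : Y × Y => (∑ j, ψ j (Lp j p)) - ∑ j, ψ j (Lm j p)) ((u, 0) : Y × Y) = 0 := by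
    rw [hF, finDiffComp_zero_fun]
  -- expand by linearity
  rw [finDiffComp_sub, finDiffComp_sum, finDiffComp_sum] at hFzero
  -- rewrite each summand via the composition lemma
  have hplus : ∀ j, finDiffComp ops2 (fun p : Y × Y => ψ j (Lp j p)) ((u,0) : Y × Y)
      = finDiffComp (ops2.map (Lp j)) (ψ j) (a j • u) := by
    intro j
    rw [finDiffComp_comp (Lp j) (hLp j)]
    show finDiffComp (ops2.map (Lp j)) (ψ j) (Lp j ((u,0) : Y × Y)) = _
    rw [hPu]
  have hminus : ∀ j, finDiffComp ops2 (fun p : Y × Y => ψ j (Lm j p)) ((u,0) : Y × Y)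
      = finDiffComp (ops2.map (Lm j)) (ψ j) (a j • u) := by
    intro j
    rw [finDiffComp_comp (Lm j) (hLm j)]
    show finDiffComp (ops2.map (Lm j)) (ψ j) (Lm j ((u,0) : Y × Y)) = _
    rw [hMu]
  -- the minus terms all vanish
  have hminus0 : ∀ j, finDiffComp (ops2.map (Lm j)) (ψ j) (a j • u) = 0 := by
    intro j
    have hmem : (0 : Y) ∈ ops2.map (Lm j) := by
      rw [hops2, List.map_append]
      apply List.mem_append_right
      rw [List.map_ofFn]
      rw [List.mem_ofFn]
      refine ⟨j, ?_⟩
      show Lm j (H j) = 0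
      rw [hMH]
      simp [mul_comm]
    rw [finDiffComp_of_zero_mem hmem]
  -- the plus terms vanish for j ≠ z
  have hplus0 : ∀ j, j ≠ z → finDiffComp (ops2.map (Lp j)) (ψ j) (a j • u) = 0 := by
    intro j hj
    have hjval : 1 ≤ (j : ℕ) := by
      rcases Nat.eq_zero_or_pos (j : ℕ) with h0 | h1
      · exact absurd (Fin.ext h0) hj
      · exact h1
    have hmem : (0 : Y) ∈ ops2.map (Lp j) := by
      rw [hops2, List.map_append]
      apply List.mem_append_left
      rw [List.map_tail, List.map_ofFn, List.ofFn_succ]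
      simp only [List.tail_cons]
      rw [List.mem_ofFn]
      refine ⟨⟨(j : ℕ) - 1, by omega⟩, ?_⟩
      have hsucc : Fin.succ (⟨(j : ℕ) - 1, by omega⟩ : Fin m) = j := by
        apply Fin.ext
        simp [Fin.val_succ]
        omega
      show Lp j (K (Fin.succ ⟨(j : ℕ) - 1, by omega⟩)) = 0
      rw [hsucc, hPK]
      simp [mul_comm]
    rw [finDiffComp_of_zero_mem hmem]
  -- assemble
  simp only [hplus, hminus, hminus0, Finset.sum_const_zero, sub_zero] at hFzero
  rw [Fintype.sum_eq_single z hplus0] at hFzero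
  -- identify with the goal
  have hlist : ops2.map (Lp z)
      = (List.ofFn fun j : Fin (m+1) => (a z * b j - b z * a j) • k j).tail
          ++ List.ofFn fun j : Fin (m+1) => (a z * b j + b z * a j) • h j := by
    have e1 : (Lp z ∘ K) = fun i => (a z * b i - b z * a i) • k i := funext (hPK z)
    have e2 : (Lp z ∘ H) = fun i => (a z * b i + b z * a i) • h i := funext (hPH z)
    rw [hops2, List.map_append, List.map_tail, List.map_ofFn, List.map_ofFn, e1, e2]
  rw [hlist] at hFzero
  exact hFzero
end

section
/- Let ξ₁, ξ₂ be independent random variables on the real line with linear forms L₁ = a₁ξ₁ + a₂ξ₂, L₂ = b₁ξ₁ + b₂ξ₂ where all aⱼ, bⱼ and b₁a₂ + b₂a₁ are nonzero, and suppose b₁a₂ − b₂a₁ = 0. If the conditional distribution of L₂ given L₁ is symmetric, then ξ₁ and ξ₂ are degenerate (i.e., the case when all 'cross-determinants' vanish forces b₁L₁ = a₁L₂ and degenerate distributions). -/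
open MeasureTheory ProbabilityTheory

/-- Heyde-type theorem on the real line in the degenerate case: if `ξ₁, ξ₂` are
independent real random variables, the integer coefficients `a₁, a₂, b₁, b₂` and
`b₁a₂ + b₂a₁` are nonzero, `b₁a₂ - b₂a₁ = 0` (so that `b₁L₁ = a₁L₂`), and the
conditional distribution of `L₂ = b₁ξ₁ + b₂ξ₂` given `L₁ = a₁ξ₁ + a₂ξ₂` is symmetric,
then `ξ₁` and `ξ₂` are degenerate. -/
theorem degenerate_of_vanishing_cross_determinant
    {Ω : Type*} [MeasurableSpace Ω] (P : Measure Ω) [IsProbabilityMeasure P]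
    (ξ₁ ξ₂ : Ω → ℝ) (hm₁ : Measurable ξ₁) (hm₂ : Measurable ξ₂)
    (hindep : IndepFun ξ₁ ξ₂ P)
    (a₁ a₂ b₁ b₂ : ℤ)
    (ha₁ : a₁ ≠ 0) (ha₂ : a₂ ≠ 0) (hb₁ : b₁ ≠ 0) (hb₂ : b₂ ≠ 0)
    (hplus : b₁ * a₂ + b₂ * a₁ ≠ 0)
    (hminus : b₁ * a₂ - b₂ * a₁ = 0)
    (L₁ L₂ : Ω → ℝ)
    (hL₁ : L₁ = fun ω => (a₁ : ℝ) * ξ₁ ω + (a₂ : ℝ) * ξ₂ ω)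
    (hL₂ : L₂ = fun ω => (b₁ : ℝ) * ξ₁ ω + (b₂ : ℝ) * ξ₂ ω)
    (hsym : Measure.map (fun ω => (L₁ ω, L₂ ω)) P
      = Measure.map (fun ω => (L₁ ω, -L₂ ω)) P) :
    (∃ c₁ : ℝ, Measure.map ξ₁ P = Measure.dirac c₁) ∧
    (∃ c₂ : ℝ, Measure.map ξ₂ P = Measure.dirac c₂) := by
  have ha₁' : (a₁ : ℝ) ≠ 0 := Int.cast_ne_zero.mpr ha₁
  have ha₂' : (a₂ : ℝ) ≠ 0 := Int.cast_ne_zero.mpr ha₂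
  have hb₁' : (b₁ : ℝ) ≠ 0 := Int.cast_ne_zero.mpr hb₁
  have hmin : (b₁ : ℝ) * a₂ = (b₂ : ℝ) * a₁ := by
    have h : b₁ * a₂ = b₂ * a₁ := sub_eq_zero.mp hminus
    exact_mod_cast h
  set c : ℝ := (b₁ : ℝ) / a₁ with hc
  have hc0 : c ≠ 0 := div_ne_zero hb₁' ha₁'
  have hL : ∀ ω, L₂ ω = c * L₁ ω := by
    intro ω
    have key : (a₁ : ℝ) * L₂ ω = (b₁ : ℝ) * L₁ ω := by
      rw [hL₁, hL₂]
      linear_combination (-(ξ₂ ω)) * hmin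
    rw [hc, div_mul_eq_mul_div, eq_div_iff ha₁']
    linarith [key]
  have hmL₁ : Measurable L₁ := by
    rw [hL₁]; exact (measurable_const.mul hm₁).add (measurable_const.mul hm₂)
  have hmL₂ : Measurable L₂ := by
    rw [hL₂]; exact (measurable_const.mul hm₁).add (measurable_const.mul hm₂)
  -- the graph set
  set S : Set (ℝ × ℝ) := {p | p.2 = c * p.1} with hSdef
  have hS : MeasurableSet S :=
    measurableSet_eq_fun measurable_snd (measurable_const.mul measurable_fst)
  have hlhs : Measure.map (fun ω => (L₁ ω, L₂ ω)) P S = 1 := by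
    rw [Measure.map_apply (hmL₁.prodMk hmL₂) hS]
    have : (fun ω => (L₁ ω, L₂ ω)) ⁻¹' S = Set.univ := by
      ext ω; simp [hSdef, hL ω]
    rw [this, measure_univ]
  have hrhs : Measure.map (fun ω => (L₁ ω, -L₂ ω)) P S = P {ω | L₁ ω = 0} := by
    rw [Measure.map_apply (hmL₁.prodMk hmL₂.neg : Measurable fun ω => (L₁ ω, -L₂ ω)) hS]
    congr 1
    ext ω
    simp only [hSdef, Set.mem_preimage, Set.mem_setOf_eq, hL ω]
    constructor
    · intro h
      have h2 : 2 * (c * L₁ ω) = 0 := by linarith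
      have := mul_eq_zero.mp h2
      rcases this with h' | h'
      · norm_num at h'
      · rcases mul_eq_zero.mp h' with h'' | h''
        · exact absurd h'' hc0
        · exact h''
    · intro h; rw [h]; ring
  have h1 : P {ω | L₁ ω = 0} = 1 := by rw [← hrhs, ← hsym, hlhs]
  have h0 : ∀ᵐ ω ∂P, L₁ ω = 0 := by
    rw [ae_iff]
    have hset : {ω | ¬ L₁ ω = 0} = (L₁ ⁻¹' {0})ᶜ := by ext ω; simp
    rw [hset, measure_compl (hmL₁ (measurableSet_singleton 0)) (measure_ne_top _ _)]
    have : L₁ ⁻¹' {0} = {ω | L₁ ω = 0} := by ext ω; simp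
    rw [this, h1, measure_univ, tsub_self]
  set d : ℝ := -(a₂ : ℝ) / a₁ with hd
  have hd0 : d ≠ 0 := div_ne_zero (neg_ne_zero.mpr ha₂') ha₁'
  have hξeq : ∀ᵐ ω ∂P, ξ₁ ω = d * ξ₂ ω := by
    filter_upwards [h0] with ω hω
    rw [hL₁] at hω
    simp only at hω
    rw [hd, div_mul_eq_mul_div, eq_div_iff ha₁']
    linarith
  -- joint law is a product
  have hμ₂prob : IsProbabilityMeasure (Measure.map ξ₂ P) :=
    Measure.isProbabilityMeasure_map hm₂.aemeasurable
  have hμ₁prob : IsProbabilityMeasure (Measure.map ξ₁ P) :=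
    Measure.isProbabilityMeasure_map hm₁.aemeasurable
  have hjoint : Measure.map (fun ω => (ξ₁ ω, ξ₂ ω)) P
      = (Measure.map ξ₁ P).prod (Measure.map ξ₂ P) :=
    (indepFun_iff_map_prod_eq_prod_map_map hm₁.aemeasurable hm₂.aemeasurable).mp hindep
  set A : Set (ℝ × ℝ) := {p | p.1 = d * p.2} with hAdef
  have hA : MeasurableSet A :=
    measurableSet_eq_fun measurable_fst (measurable_const.mul measurable_snd)
  have hPA : Measure.map (fun ω => (ξ₁ ω, ξ₂ ω)) P A = 1 := by
    rw [Measure.map_apply (hm₁.prodMk hm₂) hA]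
    have hpre : (fun ω => (ξ₁ ω, ξ₂ ω)) ⁻¹' A = {ω | ξ₁ ω = d * ξ₂ ω} := by
      ext ω; simp [hAdef]
    rw [hpre]
    rw [← measure_univ (μ := P)]
    apply measure_congr
    filter_upwards [hξeq] with ω hω
    exact propext (iff_of_true hω trivial)
  have hprodA : ((Measure.map ξ₁ P).prod (Measure.map ξ₂ P)) A = 1 := by
    rw [← hjoint]; exact hPA
  set g : ℝ → ENNReal := fun x => (Measure.map ξ₂ P) (Prod.mk x ⁻¹' A) with hgdef
  have hgmeas : Measurable g := measurable_measure_prodMk_left hA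
  have hg1 : ∀ x, g x ≤ 1 := fun x => prob_le_one
  have hint : ∫⁻ x, g x ∂(Measure.map ξ₁ P) = 1 := by
    rw [Measure.prod_apply hA] at hprodA
    exact hprodA
  have hzero : ∫⁻ x, (1 - g x) ∂(Measure.map ξ₁ P) = 0 := by
    rw [lintegral_sub hgmeas (by rw [hint]; exact ENNReal.one_ne_top) (ae_of_all _ hg1)]
    simp [hint]
  have hae : ∀ᵐ x ∂(Measure.map ξ₁ P), g x = 1 := by
    have := (lintegral_eq_zero_iff (measurable_const.sub hgmeas)).mp hzero
    filter_upwards [this] with x hx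
    simp only [Pi.zero_apply] at hx
    exact le_antisymm (hg1 x) (tsub_eq_zero_iff_le.mp hx)
  have hne : (Measure.map ξ₁ P) ≠ 0 := IsProbabilityMeasure.ne_zero _
  have hnb : (ae (Measure.map ξ₁ P)).NeBot := ae_neBot.mpr hne
  obtain ⟨x₀, hx₀⟩ := hae.exists
  have hslice : Prod.mk x₀ ⁻¹' A = {x₀ / d} := by
    ext y
    simp only [hAdef, Set.mem_preimage, Set.mem_setOf_eq, Set.mem_singleton_iff]
    rw [eq_comm, eq_div_iff hd0]
    constructor
    · intro h; linarith [h]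
    · intro h; linarith [h]
  have hmass : (Measure.map ξ₂ P) {x₀ / d} = 1 := by
    rw [← hslice]; exact hx₀
  set c₂ : ℝ := x₀ / d with hc₂
  have hξ₂ae : ∀ᵐ ω ∂P, ξ₂ ω = c₂ := by
    rw [ae_iff]
    have hset : {ω | ¬ ξ₂ ω = c₂} = (ξ₂ ⁻¹' {c₂})ᶜ := by ext ω; simp
    have hPm : P (ξ₂ ⁻¹' {c₂}) = 1 := by
      rw [← Measure.map_apply hm₂ (measurableSet_singleton c₂)]; exact hmass
    rw [hset, measure_compl (hm₂ (measurableSet_singleton c₂)) (measure_ne_top _ _),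
      measure_univ, hPm, tsub_self]
  have hξ₁ae : ∀ᵐ ω ∂P, ξ₁ ω = d * c₂ := by
    filter_upwards [hξeq, hξ₂ae] with ω h1 h2
    rw [h1, h2]
  constructor
  · refine ⟨d * c₂, ?_⟩
    have : Measure.map ξ₁ P = Measure.map (fun _ => d * c₂) P :=
      Measure.map_congr hξ₁ae
    rw [this, Measure.map_const, measure_univ, one_smul]
  · refine ⟨c₂, ?_⟩
    have : Measure.map ξ₂ P = Measure.map (fun _ => c₂) P :=
      Measure.map_congr hξ₂ae
    rw [this, Measure.map_const, measure_univ, one_smul]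
end

section
/- Let Y = ℤ(p) with p a prime, p > 3, and let y₁, y₂ ∈ Y be nonzero with y₁ ≠ ±y₂. Define f₁, f₂ : Y → ℝ by f₁(0) = 1, f₁(±y₁) = 1/2, f₁(y) = 0 otherwise, and similarly f₂ with y₂ in place of y₁. Then f₁(y)f₂(y) = g(y) where g(0) = 1 and g(y) = 0 for y ≠ 0, and f₁, f₂ satisfy f₁(u+v)f₂(u+v)f₁(u+2v)f₂(u+2v) = f₁(u−v)f₂(u−v)f₁(u−2v)f₂(u−2v) for all u, v ∈ Y. -/
/-- Lemma 6 computation on `ℤ(p)`, `p > 3` prime: with `y₁, y₂` nonzero and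
`y₁ ≠ ±y₂`, the functions `f₁` (equal to `1` at `0`, `1/2` at `±y₁`, `0` elsewhere)
and `f₂` (same with `y₂`) satisfy `f₁ f₂ = 𝟙_{0}` and the functional equation
`f₁(u+v)f₂(u+v)f₁(u+2v)f₂(u+2v) = f₁(u-v)f₂(u-v)f₁(u-2v)f₂(u-2v)`. -/
theorem product_char_functions_eq_indicator_and_symmetry
    (p : ℕ) (hp : p.Prime) (hp3 : 3 < p)
    (y₁ y₂ : ZMod p) (hy₁ : y₁ ≠ 0) (hy₂ : y₂ ≠ 0)
    (hne : y₁ ≠ y₂) (hne' : y₁ ≠ -y₂)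
    (f₁ f₂ : ZMod p → ℝ)
    (hf₁0 : f₁ 0 = 1) (hf₁y : f₁ y₁ = 1 / 2) (hf₁y' : f₁ (-y₁) = 1 / 2)
    (hf₁z : ∀ y : ZMod p, y ≠ 0 → y ≠ y₁ → y ≠ -y₁ → f₁ y = 0)
    (hf₂0 : f₂ 0 = 1) (hf₂y : f₂ y₂ = 1 / 2) (hf₂y' : f₂ (-y₂) = 1 / 2)
    (hf₂z : ∀ y : ZMod p, y ≠ 0 → y ≠ y₂ → y ≠ -y₂ → f₂ y = 0) :
    (∀ y : ZMod p, f₁ y * f₂ y = if y = 0 then 1 else 0) ∧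
    (∀ u v : ZMod p,
      f₁ (u + v) * f₂ (u + v) * (f₁ (u + 2 * v) * f₂ (u + 2 * v))
        = f₁ (u - v) * f₂ (u - v) * (f₁ (u - 2 * v) * f₂ (u - 2 * v))) := by
  have key : ∀ y : ZMod p, f₁ y * f₂ y = if y = 0 then 1 else 0 := by
    intro y
    by_cases h0 : y = 0
    · simp [h0, hf₁0, hf₂0]
    · simp only [h0, if_false]
      by_cases h1 : y = y₁
      · have : f₂ y = 0 := hf₂z y h0 (by simpa [h1] using hne)
          (by simpa [h1] using hne')
        simp [this]
      · by_cases h2 : y = -y₁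
        · have : f₂ y = 0 := hf₂z y h0
            (by rw [h2]; intro h; exact hne' (by rw [neg_eq_iff_eq_neg] at h; rw [h]))
            (by rw [h2]; intro h; exact hne (by rwa [neg_inj] at h))
          simp [this]
        · have : f₁ y = 0 := hf₁z y h0 h1 h2
          simp [this]
  refine ⟨key, fun u v => ?_⟩
  have key2 : ∀ a b : ZMod p,
      ((if a = 0 then (1:ℝ) else 0) * (if b = 0 then 1 else 0)) =
        if a = 0 ∧ b = 0 then 1 else 0 := by
    intro a b; split_ifs <;> simp_all
  rw [key, key, key, key, key2, key2]
  have hiff : (u + v = 0 ∧ u + 2 * v = 0) ↔ (u - v = 0 ∧ u - 2 * v = 0) := by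
    constructor
    · rintro ⟨h1, h2⟩
      exact ⟨by linear_combination 3 * h1 - 2 * h2, by linear_combination 4 * h1 - 3 * h2⟩
    · rintro ⟨h1, h2⟩
      exact ⟨by linear_combination 3 * h1 - 2 * h2, by linear_combination 4 * h1 - 3 * h2⟩
  rw [if_congr hiff rfl rfl]
end

section
/- Let μ₁ = μ₃ = ν₁ and μ₂ = μ₄ = ν₂ be distributions on ℤ(p) (p > 3 prime) with characteristic functions ν̂₁ supported on {0, ±y₁} with values 1, 1/2, 1/2, and ν̂₂ supported on {0, ±y₂} with values 1, 1/2, 1/2, where y₁, y₂ are nonzero and y₁ ≠ ±y₂. If ξ₁, ξ₂, ξ₃, ξ₄ are independent with distributions μ₁,…,μ₄, then the conditional distribution of L₂ = ξ₁ + ξ₂ + 2ξ₃ + 2ξ₄ given L₁ = ξ₁ + ξ₂ + ξ₃ + ξ₄ is symmetric, and none of the μⱼ is an idempotent (shift of a Haar measure of a subgroup). -/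
open MeasureTheory ProbabilityTheory

namespace HeydeAux

noncomputable def psi (p : ℕ) (k : ZMod p) : ℂ :=
  Complex.exp (2 * (Real.pi : ℂ) * Complex.I * (k.val : ℂ) / p)

variable (p : ℕ) [NeZero p]

lemma psi_nat (n : ℕ) :
    Complex.exp (2 * (Real.pi : ℂ) * Complex.I * (n : ℂ) / p) = psi p (n : ZMod p) := by
  have hp0 : (p : ℂ) ≠ 0 := Nat.cast_ne_zero.mpr (NeZero.ne p)
  have hmod : ((n : ZMod p)).val = n % p := ZMod.val_natCast p n
  have hdiv : (n : ℂ) = (p : ℂ) * ((n / p : ℕ) : ℂ) + ((n % p : ℕ) : ℂ) := by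
    exact_mod_cast congrArg (Nat.cast : ℕ → ℂ) (Nat.div_add_mod n p).symm
  have key : 2 * (Real.pi : ℂ) * Complex.I * (n : ℂ) / p
      = ((n / p : ℕ) : ℂ) * (2 * (Real.pi : ℂ) * Complex.I)
        + 2 * (Real.pi : ℂ) * Complex.I * ((n % p : ℕ) : ℂ) / p := by
    rw [hdiv]; field_simp
  rw [key, Complex.exp_add, psi, hmod]
  have h1 : Complex.exp (((n / p : ℕ) : ℂ) * (2 * (Real.pi : ℂ) * Complex.I)) = 1 := by
    simpa using Complex.exp_int_mul_two_pi_mul_I (n / p : ℕ)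
  rw [h1, one_mul]

lemma psi_add (a b : ZMod p) : psi p (a + b) = psi p a * psi p b := by
  have h1 := psi_nat p (a.val + b.val)
  have h2 : ((a.val + b.val : ℕ) : ZMod p) = a + b := by
    push_cast [ZMod.natCast_val, ZMod.cast_id]
    ring
  rw [h2] at h1
  rw [← h1, psi, psi, ← Complex.exp_add]
  congr 1
  push_cast
  ring

lemma psi_zero : psi p 0 = 1 := by
  simp [psi, ZMod.val_zero]

omit [NeZero p] in
lemma psi_abs (k : ZMod p) : ‖psi p k‖ = 1 := by
  have : psi p k = Complex.exp (((2 * Real.pi * (k.val : ℝ) / p : ℝ) : ℂ) * Complex.I) := by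
    rw [psi]; congr 1; push_cast; ring
  rw [this, Complex.norm_exp_ofReal_mul_I]

lemma psi_sum (hp1 : 1 < p) : ∑ k : ZMod p, psi p k = 0 := by
  have hp0 : (p : ℂ) ≠ 0 := Nat.cast_ne_zero.mpr (NeZero.ne p)
  set ζ : ℂ := Complex.exp (2 * (Real.pi : ℂ) * Complex.I / p) with hζ
  have hval : ∀ k : ZMod p, psi p k = ζ ^ (k.val) := by
    intro k
    rw [psi, hζ, ← Complex.exp_nat_mul]
    congr 1
    field_simp
  have h2 : 2 * ((Real.pi : ℂ) * Complex.I) ≠ 0 := by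
    simp [Real.pi_ne_zero, Complex.I_ne_zero]
  have hζ1 : ζ ≠ 1 := by
    intro h
    rw [hζ, Complex.exp_eq_one_iff] at h
    obtain ⟨n, hn⟩ := h
    field_simp at hn
    have h4 : 2 * ((Real.pi : ℂ) * Complex.I) * 1
        = 2 * ((Real.pi : ℂ) * Complex.I) * ((n : ℂ) * p) := by linear_combination (2 * ((Real.pi : ℂ) * Complex.I)) * hn
    have h5 : (1 : ℂ) = (n : ℂ) * p := mul_left_cancel₀ h2 h4
    have h6 : (1 : ℤ) = n * p := by exact_mod_cast h5
    have h7 : (p : ℤ) ∣ 1 := ⟨n, by linarith⟩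
    have h8 : (p : ℤ) ≤ 1 := Int.le_of_dvd one_pos h7
    have : 1 < (p : ℤ) := by exact_mod_cast hp1
    omega
  have hζp : ζ ^ p = 1 := by
    rw [hζ, ← Complex.exp_nat_mul]
    rw [show (p : ℂ) * (2 * (Real.pi : ℂ) * Complex.I / p) = 2 * Real.pi * Complex.I by
      field_simp]
    exact Complex.exp_two_pi_mul_I
  calc ∑ k : ZMod p, psi p k = ∑ k : ZMod p, ζ ^ (k.val) :=
        Finset.sum_congr rfl fun k _ => hval k
    _ = ∑ i ∈ Finset.range p, ζ ^ i := by
        refine Finset.sum_nbij' (fun k : ZMod p => k.val) (fun i : ℕ => (i : ZMod p))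
          ?_ ?_ ?_ ?_ ?_
        · intro a _; exact Finset.mem_range.mpr (ZMod.val_lt a)
        · intro a _; exact Finset.mem_univ _
        · intro a _; exact ZMod.natCast_rightInverse a
        · intro a ha; exact ZMod.val_cast_of_lt (Finset.mem_range.mp ha)
        · intro a _; rfl
    _ = (ζ ^ p - 1) / (ζ - 1) := geom_sum_eq hζ1 p
    _ = 0 := by rw [hζp]; simp

lemma psi_char_sum [Fact (Nat.Prime p)] (hp : 1 < p) (k : ZMod p) :
    ∑ x : ZMod p, psi p (k * x) = if k = 0 then (p : ℂ) else 0 := by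
  by_cases hk : k = 0
  · subst hk
    simp [psi_zero, Finset.card_univ, ZMod.card]
  · rw [if_neg hk]
    rw [← psi_sum p hp]
    exact Fintype.sum_bijective (fun x => k * x) (mulLeft_bijective₀ k hk) _ _ (fun x => rfl)

lemma inversion [Fact (Nat.Prime p)] (hp1 : 1 < p) (b : ZMod p → ℝ)
    (hb : ∀ y : ZMod p, ∑ σ : ZMod p, psi p (σ * y) * ((b σ : ℝ) : ℂ) = if y = 0 then 1 else 0)
    (σ : ZMod p) : b σ = 1 / p := by
  have hp0 : (p : ℂ) ≠ 0 := Nat.cast_ne_zero.mpr (NeZero.ne p)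
  have h1 : ∑ y : ZMod p, psi p ((-σ) * y) * (∑ σ' : ZMod p, psi p (σ' * y) * ((b σ' : ℝ) : ℂ))
      = (p : ℂ) * (b σ : ℝ) := by
    calc ∑ y : ZMod p, psi p ((-σ) * y) * (∑ σ' : ZMod p, psi p (σ' * y) * ((b σ' : ℝ) : ℂ))
        = ∑ y : ZMod p, ∑ σ' : ZMod p, psi p ((σ' - σ) * y) * ((b σ' : ℝ) : ℂ) := by
          refine Finset.sum_congr rfl fun y _ => ?_
          rw [Finset.mul_sum]
          refine Finset.sum_congr rfl fun σ' _ => ?_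
          rw [show (σ' - σ) * y = (-σ) * y + σ' * y by ring, psi_add]
          ring
      _ = ∑ σ' : ZMod p, ∑ y : ZMod p, psi p ((σ' - σ) * y) * ((b σ' : ℝ) : ℂ) :=
          Finset.sum_comm
      _ = ∑ σ' : ZMod p, (if σ' - σ = 0 then (p : ℂ) else 0) * ((b σ' : ℝ) : ℂ) := by
          refine Finset.sum_congr rfl fun σ' _ => ?_
          rw [← Finset.sum_mul, psi_char_sum p hp1]
      _ = (p : ℂ) * (b σ : ℝ) := by
          rw [Finset.sum_eq_single σ]
          · simp
          · intro σ' _ hσ'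
            rw [if_neg (by simpa [sub_eq_zero] using hσ'), zero_mul]
          · intro h; exact absurd (Finset.mem_univ σ) h
  have h2 : ∑ y : ZMod p, psi p ((-σ) * y) * (∑ σ' : ZMod p, psi p (σ' * y) * ((b σ' : ℝ) : ℂ))
      = 1 := by
    calc ∑ y : ZMod p, psi p ((-σ) * y) * (∑ σ' : ZMod p, psi p (σ' * y) * ((b σ' : ℝ) : ℂ))
        = ∑ y : ZMod p, psi p ((-σ) * y) * (if y = 0 then 1 else 0) := by
          refine Finset.sum_congr rfl fun y _ => by rw [hb y]
      _ = 1 := by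
          rw [Finset.sum_eq_single 0]
          · simp [psi_zero]
          · intro y _ hy; rw [if_neg hy, mul_zero]
          · intro h; exact absurd (Finset.mem_univ 0) h
  have h3 : (p : ℂ) * (b σ : ℝ) = 1 := by rw [← h1, h2]
  have h4 : ((b σ : ℝ) : ℂ) = ((1 / p : ℝ) : ℂ) := by
    rw [Complex.ofReal_div, Complex.ofReal_one, Complex.ofReal_natCast, eq_div_iff hp0]
    linear_combination h3
  exact_mod_cast h4

end HeydeAux

/-- Lemma 6 of the paper: on `X = ℤ(p)`, `p > 3` prime, let `ξ₁, ξ₂, ξ₃, ξ₄` be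
independent random variables with distributions `μ₁ = μ₃ = ν₁`, `μ₂ = μ₄ = ν₂`, where
`ν̂₁` equals `1` at `0`, `1/2` at `±y₁` and `0` elsewhere and `ν̂₂` is analogous with
`y₂`, with `y₁, y₂` nonzero and `y₁ ≠ ±y₂`.  Then the conditional distribution of
`L₂ = ξ₁ + ξ₂ + 2ξ₃ + 2ξ₄` given `L₁ = ξ₁ + ξ₂ + ξ₃ + ξ₄` is symmetric, and no `μⱼ`
is a shift of the Haar distribution of a subgroup of `ℤ(p)`. -/
theorem heyde_counterexample_on_cyclic_group
    (p : ℕ) [NeZero p] (hp : p.Prime) (hp3 : 3 < p)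
    [MeasurableSpace (ZMod p)] [MeasurableSingletonClass (ZMod p)]
    (y₁ y₂ : ZMod p) (hy₁ : y₁ ≠ 0) (hy₂ : y₂ ≠ 0)
    (hne : y₁ ≠ y₂) (hne' : y₁ ≠ -y₂)
    (e : ZMod p → ZMod p → ℂ)
    (he : ∀ x y : ZMod p,
      e x y = Complex.exp (2 * (Real.pi : ℂ) * Complex.I * (x.val : ℂ) * (y.val : ℂ) / (p : ℂ)))
    {Ω : Type*} [MeasurableSpace Ω] (P : Measure Ω) [IsProbabilityMeasure P]
    (ξ : Fin 4 → Ω → ZMod p) (hmeas : ∀ j, Measurable (ξ j))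
    (hindep : iIndepFun ξ P)
    (c : Fin 4 → ZMod p) (hc : c = ![y₁, y₂, y₁, y₂])
    (hchar : ∀ (j : Fin 4) (y : ZMod p),
      ∑ x : ZMod p, e x y * ((Measure.map (ξ j) P {x}).toReal : ℂ)
        = if y = 0 then 1 else if y = c j ∨ y = -(c j) then 1 / 2 else 0) :
    Measure.map (fun ω => (ξ 0 ω + ξ 1 ω + ξ 2 ω + ξ 3 ω,
        ξ 0 ω + ξ 1 ω + 2 * ξ 2 ω + 2 * ξ 3 ω)) P
      = Measure.map (fun ω => (ξ 0 ω + ξ 1 ω + ξ 2 ω + ξ 3 ω,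
        -(ξ 0 ω + ξ 1 ω + 2 * ξ 2 ω + 2 * ξ 3 ω))) P
    ∧ ∀ j : Fin 4,
        ¬ ∃ (H : AddSubgroup (ZMod p)) (x₀ : ZMod p),
          Measure.map (ξ j) P
            = Measure.map (fun h : H => x₀ + (h : ZMod p))
                ((Nat.card H : ENNReal)⁻¹ • Measure.count) := by
  haveI : Fact (Nat.Prime p) := ⟨hp⟩
  have hp1 : 1 < p := hp.one_lt
  -- e in terms of psi
  have he' : ∀ x y : ZMod p, e x y = HeydeAux.psi p (x * y) := by
    intro x y
    rw [he x y]
    have h1 := HeydeAux.psi_nat p (x.val * y.val)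
    have h2 : ((x.val * y.val : ℕ) : ZMod p) = x * y := by
      push_cast [ZMod.natCast_val, ZMod.cast_id]
      ring
    rw [h2] at h1
    rw [← h1]
    congr 1
    push_cast
    ring
  have hchar' : ∀ (j : Fin 4) (y : ZMod p),
      ∑ x : ZMod p, HeydeAux.psi p (x * y) * ((Measure.map (ξ j) P {x}).toReal : ℂ)
        = if y = 0 then 1 else if y = c j ∨ y = -(c j) then 1 / 2 else 0 := by
    intro j y
    rw [← hchar j y]
    exact Finset.sum_congr rfl fun x _ => by rw [he']
  -- the distribution of ξ i + ξ j is uniform whenever c i = y₁, c j = y₂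
  have key : ∀ i j : Fin 4, i ≠ j → c i = y₁ → c j = y₂ →
      ∀ σ₀ : ZMod p,
        Measure.map (fun ω => ξ i ω + ξ j ω) P {σ₀} = (p : ENNReal)⁻¹ := by
    intro i j hij hci hcj σ₀
    have hSmeas : Measurable (fun ω => ξ i ω + ξ j ω) := (hmeas i).add (hmeas j)
    haveI : IsProbabilityMeasure (Measure.map (fun ω => ξ i ω + ξ j ω) P) :=
      Measure.isProbabilityMeasure_map hSmeas.aemeasurable
    set b : ZMod p → ℝ :=
      fun σ => (Measure.map (fun ω => ξ i ω + ξ j ω) P {σ}).toReal with hbdef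
    have hconv : ∀ σ : ZMod p, b σ
        = ∑ x : ZMod p,
            (Measure.map (ξ i) P {x}).toReal * (Measure.map (ξ j) P {σ - x}).toReal := by
      intro σ
      have hpre : (fun ω => ξ i ω + ξ j ω) ⁻¹' {σ}
          = ⋃ x : ZMod p, (ξ i ⁻¹' {x} ∩ ξ j ⁻¹' {σ - x}) := by
        ext ω
        simp only [Set.mem_preimage, Set.mem_singleton_iff, Set.mem_iUnion, Set.mem_inter_iff]
        constructor
        · intro h; exact ⟨ξ i ω, rfl, by rw [← h]; ring⟩
        · rintro ⟨x, h1, h2⟩; rw [h1, h2]; ring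
      have hdisj : Pairwise (Function.onFun Disjoint
          fun x : ZMod p => ξ i ⁻¹' {x} ∩ ξ j ⁻¹' {σ - x}) := by
        intro x x' hxx'
        refine Set.disjoint_left.mpr ?_
        rintro ω ⟨h1, _⟩ ⟨h2, _⟩
        exact hxx' (h1.symm.trans h2)
      have hindep2 : IndepFun (ξ i) (ξ j) P := hindep.indepFun hij
      rw [hbdef]
      simp only []
      rw [Measure.map_apply hSmeas (measurableSet_singleton σ), hpre,
        measure_iUnion hdisj (fun x =>
          ((hmeas i) (measurableSet_singleton x)).inter
            ((hmeas j) (measurableSet_singleton _))),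
        tsum_fintype,
        ENNReal.toReal_sum (fun x _ => measure_ne_top P _)]
      refine Finset.sum_congr rfl fun x _ => ?_
      rw [hindep2.measure_inter_preimage_eq_mul _ _ (measurableSet_singleton _)
          (measurableSet_singleton _), ENNReal.toReal_mul,
        Measure.map_apply (hmeas i) (measurableSet_singleton _),
        Measure.map_apply (hmeas j) (measurableSet_singleton _)]
    have hbhat : ∀ y : ZMod p,
        ∑ σ : ZMod p, HeydeAux.psi p (σ * y) * ((b σ : ℝ) : ℂ) = if y = 0 then 1 else 0 := by
      intro y
      have step1 : ∑ σ : ZMod p, HeydeAux.psi p (σ * y) * ((b σ : ℝ) : ℂ)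
          = (∑ x : ZMod p, HeydeAux.psi p (x * y) * ((Measure.map (ξ i) P {x}).toReal : ℂ))
            * (∑ u : ZMod p, HeydeAux.psi p (u * y) * ((Measure.map (ξ j) P {u}).toReal : ℂ)) := by
        calc ∑ σ : ZMod p, HeydeAux.psi p (σ * y) * ((b σ : ℝ) : ℂ)
            = ∑ σ : ZMod p, ∑ x : ZMod p,
                (HeydeAux.psi p (x * y) * ((Measure.map (ξ i) P {x}).toReal : ℂ))
                  * (HeydeAux.psi p ((σ - x) * y)
                      * ((Measure.map (ξ j) P {σ - x}).toReal : ℂ)) := by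
              refine Finset.sum_congr rfl fun σ _ => ?_
              rw [hconv σ]
              push_cast
              rw [Finset.mul_sum]
              refine Finset.sum_congr rfl fun x _ => ?_
              rw [show σ * y = x * y + (σ - x) * y by ring, HeydeAux.psi_add]
              ring
          _ = ∑ x : ZMod p, ∑ σ : ZMod p,
                (HeydeAux.psi p (x * y) * ((Measure.map (ξ i) P {x}).toReal : ℂ))
                  * (HeydeAux.psi p ((σ - x) * y)
                      * ((Measure.map (ξ j) P {σ - x}).toReal : ℂ)) := Finset.sum_comm
          _ = ∑ x : ZMod p,
                (HeydeAux.psi p (x * y) * ((Measure.map (ξ i) P {x}).toReal : ℂ))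
                  * (∑ u : ZMod p, HeydeAux.psi p (u * y)
                      * ((Measure.map (ξ j) P {u}).toReal : ℂ)) := by
              refine Finset.sum_congr rfl fun x _ => ?_
              rw [← Finset.mul_sum]
              congr 1
              exact (Fintype.sum_bijective (fun u : ZMod p => u + x)
                (Equiv.addRight x).bijective
                (fun u => HeydeAux.psi p (u * y)
                  * ((Measure.map (ξ j) P {u}).toReal : ℂ))
                (fun σ => HeydeAux.psi p ((σ - x) * y)
                  * ((Measure.map (ξ j) P {σ - x}).toReal : ℂ))
                (fun u => by simp)).symm
          _ = _ := by rw [← Finset.sum_mul]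
      rw [step1, hchar' i y, hchar' j y, hci, hcj]
      by_cases h0 : y = 0
      · simp [h0]
      · rw [if_neg h0, if_neg h0, if_neg h0]
        by_cases h1 : y = y₁ ∨ y = -y₁
        · have h2 : ¬(y = y₂ ∨ y = -y₂) := by
            rcases h1 with h | h <;> subst h <;> push_neg <;> constructor
            · exact hne
            · exact hne'
            · intro hh; exact hne' (by linear_combination -hh)
            · intro hh; exact hne (by linear_combination -hh)
          rw [if_pos h1, if_neg h2, mul_zero]
        · rw [if_neg h1, zero_mul]
    have hval := HeydeAux.inversion p hp1 b hbhat σ₀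
    have hne_top : Measure.map (fun ω => ξ i ω + ξ j ω) P {σ₀} ≠ ⊤ := measure_ne_top _ _
    rw [← ENNReal.ofReal_toReal hne_top]
    have : (Measure.map (fun ω => ξ i ω + ξ j ω) P {σ₀}).toReal = 1 / p := hval
    rw [this, one_div, ENNReal.ofReal_inv_of_pos (by positivity), ENNReal.ofReal_natCast]
  -- independence of the two block sums
  have hST : IndepFun (fun ω => ξ 0 ω + ξ 1 ω) (fun ω => ξ 2 ω + ξ 3 ω) P := by
    have := hindep.indepFun_add_add hmeas 0 1 2 3
      (by decide) (by decide) (by decide) (by decide)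
    exact this
  have hc0 : c 0 = y₁ := by rw [hc]; rfl
  have hc1 : c 1 = y₂ := by rw [hc]; rfl
  have hc2 : c 2 = y₁ := by rw [hc]; rfl
  have hc3 : c 3 = y₂ := by rw [hc]; rfl
  have hS := key 0 1 (by decide) hc0 hc1
  have hT := key 2 3 (by decide) hc2 hc3
  have hjoint : ∀ u v : ZMod p,
      P ((fun ω => ξ 0 ω + ξ 1 ω) ⁻¹' {u} ∩ (fun ω => ξ 2 ω + ξ 3 ω) ⁻¹' {v})
        = (p : ENNReal)⁻¹ * (p : ENNReal)⁻¹ := by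
    intro u v
    rw [hST.measure_inter_preimage_eq_mul _ _ (measurableSet_singleton _)
      (measurableSet_singleton _)]
    rw [← Measure.map_apply (f := fun ω => ξ 0 ω + ξ 1 ω) ((hmeas 0).add (hmeas 1)) (measurableSet_singleton _),
      ← Measure.map_apply (f := fun ω => ξ 2 ω + ξ 3 ω) ((hmeas 2).add (hmeas 3)) (measurableSet_singleton _),
      hS u, hT v]
  constructor
  · -- symmetry of the joint distribution
    have hL : Measurable (fun ω => (ξ 0 ω + ξ 1 ω + ξ 2 ω + ξ 3 ω,
        ξ 0 ω + ξ 1 ω + 2 * ξ 2 ω + 2 * ξ 3 ω)) := by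
      exact ((((hmeas 0).add (hmeas 1)).add (hmeas 2)).add (hmeas 3)).prodMk
        ((((hmeas 0).add (hmeas 1)).add (measurable_const.mul (hmeas 2))).add
          (measurable_const.mul (hmeas 3)))
    have hL' : Measurable (fun ω => (ξ 0 ω + ξ 1 ω + ξ 2 ω + ξ 3 ω,
        -(ξ 0 ω + ξ 1 ω + 2 * ξ 2 ω + 2 * ξ 3 ω))) := by
      exact ((((hmeas 0).add (hmeas 1)).add (hmeas 2)).add (hmeas 3)).prodMk
        ((((hmeas 0).add (hmeas 1)).add (measurable_const.mul (hmeas 2))).add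
          (measurable_const.mul (hmeas 3))).neg
    refine Measure.ext_of_singleton fun st => ?_
    obtain ⟨s, t⟩ := st
    rw [Measure.map_apply hL (measurableSet_singleton _),
      Measure.map_apply hL' (measurableSet_singleton _)]
    have e1 : (fun ω => (ξ 0 ω + ξ 1 ω + ξ 2 ω + ξ 3 ω,
        ξ 0 ω + ξ 1 ω + 2 * ξ 2 ω + 2 * ξ 3 ω)) ⁻¹' {(s, t)}
        = (fun ω => ξ 0 ω + ξ 1 ω) ⁻¹' {2 * s - t} ∩ (fun ω => ξ 2 ω + ξ 3 ω) ⁻¹' {t - s} := by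
      ext ω
      simp only [Set.mem_preimage, Set.mem_singleton_iff, Prod.mk.injEq, Set.mem_inter_iff]
      constructor
      · rintro ⟨h1, h2⟩
        exact ⟨by linear_combination 2 * h1 - h2, by linear_combination h2 - h1⟩
      · rintro ⟨h1, h2⟩
        exact ⟨by linear_combination h1 + h2, by linear_combination h1 + 2 * h2⟩
    have e2 : (fun ω => (ξ 0 ω + ξ 1 ω + ξ 2 ω + ξ 3 ω,
        -(ξ 0 ω + ξ 1 ω + 2 * ξ 2 ω + 2 * ξ 3 ω))) ⁻¹' {(s, t)}
        = (fun ω => ξ 0 ω + ξ 1 ω) ⁻¹' {2 * s + t} ∩ (fun ω => ξ 2 ω + ξ 3 ω) ⁻¹' {-t - s} := by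
      ext ω
      simp only [Set.mem_preimage, Set.mem_singleton_iff, Prod.mk.injEq, Set.mem_inter_iff]
      constructor
      · rintro ⟨h1, h2⟩
        exact ⟨by linear_combination 2 * h1 + h2, by linear_combination -h2 - h1⟩
      · rintro ⟨h1, h2⟩
        exact ⟨by linear_combination h1 + h2, by linear_combination -h1 - 2 * h2⟩
    rw [e1, e2, hjoint, hjoint]
  · -- no idempotent factors
    rintro j ⟨H, x₀, hmap⟩
    have hcj0 : c j ≠ 0 := by
      fin_cases j <;> simp only [hc] <;>
        first
          | exact hy₁
          | exact hy₂
          | simpa using hy₁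
          | simpa using hy₂
    have hx := hchar' j (c j)
    rw [if_neg hcj0, if_pos (Or.inl rfl)] at hx
    have hdvd : Nat.card H ∣ p := by
      simpa [Nat.card_zmod] using AddSubgroup.card_addSubgroup_dvd_card H
    rcases hp.eq_one_or_self_of_dvd _ hdvd with h1 | h1
    · -- H = ⊥ : the measure is a Dirac measure
      have hH : H = ⊥ := AddSubgroup.card_eq_one.mp h1
      subst hH
      have hmval : ∀ x : ZMod p, Measure.map (ξ j) P {x} = if x = x₀ then 1 else 0 := by
        intro x
        rw [hmap, Measure.map_apply (measurable_of_countable _) (measurableSet_singleton _)]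
        have hpre : ((fun h : (⊥ : AddSubgroup (ZMod p)) => x₀ + (h : ZMod p)) ⁻¹' {x})
            = if x = x₀ then (Set.univ : Set (⊥ : AddSubgroup (ZMod p))) else ∅ := by
          ext h
          obtain ⟨hv, hh⟩ := h
          rw [AddSubgroup.mem_bot] at hh
          subst hh
          by_cases hxx : x = x₀
          · subst hxx; simp
          · rw [if_neg hxx]
            simp only [Set.mem_preimage, Set.mem_singleton_iff, Set.mem_empty_iff_false,
              iff_false]
            intro hcontr
            exact hxx (by simpa using hcontr.symm)
        rw [hpre, AddSubgroup.card_bot]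
        by_cases hxx : x = x₀
        · rw [if_pos hxx, if_pos hxx]
          have huniv : (Set.univ : Set (⊥ : AddSubgroup (ZMod p)))
              = {(0 : (⊥ : AddSubgroup (ZMod p)))} := by
            ext h
            obtain ⟨hv, hh⟩ := h
            rw [AddSubgroup.mem_bot] at hh
            subst hh
            simp
          simp [huniv, Measure.count_singleton]
        · rw [if_neg hxx, if_neg hxx]
          simp
      have hψ : HeydeAux.psi p (x₀ * c j) = 1 / 2 := by
        rw [← hx]
        rw [Finset.sum_eq_single x₀]
        · rw [hmval x₀, if_pos rfl]; simp
        · intro x _ hx0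
          rw [hmval x, if_neg hx0]
          simp
        · intro h; exact absurd (Finset.mem_univ x₀) h
      have := congrArg (‖·‖) hψ
      rw [HeydeAux.psi_abs] at this
      rw [norm_div, norm_one, Complex.norm_two] at this
      norm_num at this
    · -- H = ⊤ : the measure is uniform
      have hH : H = ⊤ := by
        refine (AddSubgroup.card_eq_iff_eq_top H).mp ?_
        rw [h1, Nat.card_zmod]
      subst hH
      have hmval : ∀ x : ZMod p, Measure.map (ξ j) P {x} = (p : ENNReal)⁻¹ := by
        intro x
        rw [hmap, Measure.map_apply (measurable_of_countable _) (measurableSet_singleton _)]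
        have hpre : ((fun h : (⊤ : AddSubgroup (ZMod p)) => x₀ + (h : ZMod p)) ⁻¹' {x})
            = {(⟨x - x₀, AddSubgroup.mem_top _⟩ : (⊤ : AddSubgroup (ZMod p)))} := by
          ext h
          obtain ⟨hv, hh⟩ := h
          simp only [Set.mem_preimage, Set.mem_singleton_iff, Subtype.ext_iff]
          constructor
          · intro hhh; simpa using by linear_combination hhh
          · intro hhh; simpa using by linear_combination hhh
        rw [hpre, AddSubgroup.card_top, Nat.card_zmod, Measure.smul_apply,
          Measure.count_singleton, smul_eq_mul, mul_one]
      have hzero : (0 : ℂ) = 1 / 2 := by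
        rw [← hx]
        have : ∀ x : ZMod p, HeydeAux.psi p (x * c j)
            * (((Measure.map (ξ j) P {x}).toReal : ℝ) : ℂ)
            = HeydeAux.psi p (c j * x) * ((p : ℝ)⁻¹ : ℂ) := by
          intro x
          rw [hmval x, mul_comm x (c j), ENNReal.toReal_inv, ENNReal.toReal_natCast]
          norm_cast
        rw [Finset.sum_congr rfl fun x _ => this x, ← Finset.sum_mul,
          HeydeAux.psi_char_sum p hp1 (c j), if_neg hcj0, zero_mul]
      norm_num at hzero
end
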